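/- Let G = (V,E) be a finite simple graph, let E' ⊆ E, and let {u,w} ∈ E'. Let C = { z ∈ V : z is an endpoint of some edge {x,y} ∈ E' such that {u,w} ∪ {x,y} is a clique in G }. If C is a clique in G, then there exists a set of cliques of G of minimum cardinality θ_E(G,E') covering every edge of E' that contains C as a member. -/

import Mathlib

open SimpleGraph

/-- The (partial) transformed graph `G'_VCC` of a graph `G` with respect to a set `E'` of
edges of `G`: one vertex per edge of `E'`, two distinct vertices adjacent iff the union of
the endpoints of their corresponding edges is a clique in `G`. -/
def SimpleGraph.transGraph {V : Type*} (G : SimpleGraph V) (E' : Set (Sym2 V)) :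
    SimpleGraph {e : Sym2 V // e ∈ E'} where
  Adj a b := a ≠ b ∧ G.IsClique ({x | x ∈ a.1} ∪ {x | x ∈ b.1})
  symm := by
    refine ⟨fun a b h => ?_⟩
    exact ⟨h.1.symm, by rw [Set.union_comm]; exact h.2⟩
  loopless := by
    refine ⟨fun a h => ?_⟩
    exact h.1 rfl

/-- The minimum cardinality of a vertex clique cover of `G`. -/
noncomputable def SimpleGraph.vccNumber {W : Type*} (G : SimpleGraph W) : ℕ :=
  sInf {n | ∃ 𝒞 : Set (Set W), 𝒞.Finite ∧ 𝒞.ncard = n ∧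
    (∀ C ∈ 𝒞, G.IsClique C) ∧ ∀ w : W, ∃ C ∈ 𝒞, w ∈ C}

/-- The minimum cardinality of a set of cliques of `G` covering every edge of `E'`. -/
noncomputable def SimpleGraph.eccNumberOn {W : Type*} (G : SimpleGraph W)
    (E' : Set (Sym2 W)) : ℕ :=
  sInf {n | ∃ 𝒞 : Set (Set W), 𝒞.Finite ∧ 𝒞.ncard = n ∧
    (∀ C ∈ 𝒞, G.IsClique C) ∧ ∀ e ∈ E', ∃ C ∈ 𝒞, ∀ x ∈ e, x ∈ C}

/-- The minimum cardinality of an edge clique cover of `G`. -/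
noncomputable def SimpleGraph.eccNumber {W : Type*} (G : SimpleGraph W) : ℕ :=
  G.eccNumberOn G.edgeSet

/-- `G` is `d`-degenerate: every nonempty (induced) subgraph has a vertex of degree at most
`d`. -/
def SimpleGraph.Degenerate {W : Type*} (G : SimpleGraph W) (d : ℕ) : Prop :=
  ∀ S : Set W, S.Nonempty → ∃ v ∈ S, {u ∈ S | G.Adj v u}.ncard ≤ d

/-- The degeneracy of `G`: the smallest `d` such that `G` is `d`-degenerate. -/
noncomputable def SimpleGraph.degeneracy {W : Type*} (G : SimpleGraph W) : ℕ :=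
  sInf {d | G.Degenerate d}

/-- Let `{u,w} ∈ E'` and let `C` be the set of all endpoints of edges
`{x,y} ∈ E'` such that `{u,w} ∪ {x,y}` is a clique in `G`. If `C` is a clique in
`G`, then there is a minimum-cardinality set of cliques of `G` covering every edge of
`E'` that contains `C` as a member. -/
theorem stmt_13 {V : Type*} [Fintype V] (G : SimpleGraph V) (E' : Set (Sym2 V))
    (hE' : E' ⊆ G.edgeSet) (u w : V) (he : s(u, w) ∈ E')
    (C : Set V)
    (hC : C = {z : V | ∃ e ∈ E', z ∈ e ∧
      G.IsClique ({x | x ∈ (s(u, w) : Sym2 V)} ∪ {x | x ∈ e})})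
    (hclique : G.IsClique C) :
    ∃ 𝒞 : Set (Set V), 𝒞.Finite ∧ (∀ D ∈ 𝒞, G.IsClique D) ∧
      (∀ e ∈ E', ∃ D ∈ 𝒞, ∀ x ∈ e, x ∈ D) ∧
      𝒞.ncard = G.eccNumberOn E' ∧ C ∈ 𝒞 := by
  classical
  set S : Set ℕ := {n | ∃ 𝒞 : Set (Set V), 𝒞.Finite ∧ 𝒞.ncard = n ∧
    (∀ C ∈ 𝒞, G.IsClique C) ∧ ∀ e ∈ E', ∃ C ∈ 𝒞, ∀ x ∈ e, x ∈ C} with hS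
  have edgeClique : ∀ e ∈ E', G.IsClique {x | x ∈ e} := by
    intro e heE
    induction e with
    | _ a b =>
      have hadj : G.Adj a b := hE' heE
      have : {x | x ∈ (s(a, b) : Sym2 V)} = {a, b} := by
        ext x; simp [Sym2.mem_iff]
      rw [this, SimpleGraph.isClique_pair]
      exact fun _ => hadj
  have hSne : S.Nonempty := by
    refine ⟨((fun e => {x | x ∈ e}) '' E').ncard, (fun e => {x | x ∈ e}) '' E',
      Set.toFinite _, rfl, ?_, ?_⟩
    · rintro D ⟨e, heE, rfl⟩; exact edgeClique e heE
    · intro e heE; exact ⟨{x | x ∈ e}, ⟨e, heE, rfl⟩, fun x hx => hx⟩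
  have hmem : G.eccNumberOn E' ∈ S := Nat.sInf_mem hSne
  obtain ⟨𝒞₀, h₀fin, h₀card, h₀cl, h₀cov⟩ := hmem
  obtain ⟨D, hD𝒞, hDcov⟩ := h₀cov s(u, w) he
  have huD : u ∈ D := hDcov u (by simp)
  have hwD : w ∈ D := hDcov w (by simp)
  -- any edge covered by D has its endpoints in C
  have hsubC : ∀ e ∈ E', (∀ x ∈ e, x ∈ D) → ∀ x ∈ e, x ∈ C := by
    intro e heE hcov x hx
    rw [hC]
    refine ⟨e, heE, hx, (h₀cl D hD𝒞).subset ?_⟩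
    rintro z (hz | hz)
    · simp only [Set.mem_setOf_eq, Sym2.mem_iff] at hz
      rcases hz with rfl | rfl
      exacts [huD, hwD]
    · exact hcov z hz
  refine ⟨insert C (𝒞₀ \ {D}), Set.toFinite _, ?_, ?_, ?_, Set.mem_insert _ _⟩
  · rintro E (rfl | ⟨hE, -⟩)
    · exact hclique
    · exact h₀cl _ hE
  · intro e heE
    obtain ⟨D', hD'𝒞, hD'cov⟩ := h₀cov e heE
    by_cases hDD : D' = D
    · exact ⟨C, Set.mem_insert _ _, hsubC e heE (hDD ▸ hD'cov)⟩
    · exact ⟨D', Set.mem_insert_of_mem _ ⟨hD'𝒞, hDD⟩, hD'cov⟩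
  · have hle : (insert C (𝒞₀ \ {D})).ncard ≤ G.eccNumberOn E' := by
      calc (insert C (𝒞₀ \ {D})).ncard ≤ (𝒞₀ \ {D}).ncard + 1 :=
            Set.ncard_insert_le _ _
        _ = (𝒞₀.ncard - 1) + 1 := by
            rw [Set.ncard_diff_singleton_of_mem hD𝒞]
        _ ≤ 𝒞₀.ncard := by
            have : 1 ≤ 𝒞₀.ncard := (Set.ncard_pos h₀fin).mpr ⟨D, hD𝒞⟩
            omega
        _ = G.eccNumberOn E' := h₀card
    have hge : G.eccNumberOn E' ≤ (insert C (𝒞₀ \ {D})).ncard := by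
      apply Nat.sInf_le
      refine ⟨insert C (𝒞₀ \ {D}), Set.toFinite _, rfl, ?_, ?_⟩
      · rintro E (rfl | ⟨hE, -⟩)
        · exact hclique
        · exact h₀cl _ hE
      · intro e heE
        obtain ⟨D', hD'𝒞, hD'cov⟩ := h₀cov e heE
        by_cases hDD : D' = D
        · exact ⟨C, Set.mem_insert _ _, hsubC e heE (hDD ▸ hD'cov)⟩
        · exact ⟨D', Set.mem_insert_of_mem _ ⟨hD'𝒞, hDD⟩, hD'cov⟩
    omega
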